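/- Let (Ω, 𝒜, μ) be a measure space. Let σ, w, h : Ω → ℝ be measurable and essentially bounded, let G, P, Q ∈ L²(μ; ℝ^N), and let S ⊆ L²(μ; ℝ^N) be a set of square-integrable vector fields with P ∈ S and Q ∈ S. Assume the two variational identities: (i) for all v ∈ S, ∫_Ω σ ⟨P, v⟩ dμ = − ∫_Ω σ w ⟨G, v⟩ dμ, and (ii) for all v ∈ S, ∫_Ω σ ⟨Q, v⟩ dμ = − ∫_Ω h ⟨G, v⟩ dμ. Then ∫_Ω ( h‖G‖² + 2σ⟨G, Q⟩ ) · w dμ = ∫_Ω h · ( w‖G‖² + 2⟨G, P⟩ ) dμ. -/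

import Mathlib

open MeasureTheory
open scoped ENNReal RealInnerProductSpace

private lemma memLinfty_mul_integrable {Ω : Type*} [MeasurableSpace Ω] {μ : Measure Ω}
    {f g : Ω → ℝ} (hf : MemLp f ∞ μ) (hg : Integrable g μ) :
    Integrable (fun x => f x * g x) μ := by
  rw [← memLp_one_iff_integrable] at hg ⊢
  exact hg.smul hf

private lemma integrable_inner_of_memL2 {Ω : Type*} [MeasurableSpace Ω] {μ : Measure Ω} {N : ℕ}
    {G Q : Ω → EuclideanSpace ℝ (Fin N)} (hG : MemLp G 2 μ) (hQ : MemLp Q 2 μ) :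
    Integrable (fun x => ⟪G x, Q x⟫) μ := by
  rw [← memLp_one_iff_integrable]
  have hn : MemLp (fun x => ‖G x‖ • ‖Q x‖) 1 μ :=
    hQ.norm.smul hG.norm
  refine hn.of_le (hG.1.inner hQ.1) ?_
  filter_upwards with x
  have hnn : (0:ℝ) ≤ ‖G x‖ * ‖Q x‖ := by positivity
  calc ‖⟪G x, Q x⟫‖ ≤ ‖G x‖ * ‖Q x‖ := norm_inner_le_norm _ _
    _ = ‖‖G x‖ • ‖Q x‖‖ := by rw [smul_eq_mul, Real.norm_eq_abs, abs_of_nonneg hnn]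

/-- **The central identity for the adjoint of the Fréchet derivative.**
Given essentially bounded `σ, w, h`, square-integrable vector fields `G, P, Q` with
`P, Q` in a class `S` of square-integrable vector fields, and the two variational
identities (i) `∫ σ⟪P,v⟫ = −∫ σ w ⟪G,v⟫` and (ii) `∫ σ⟪Q,v⟫ = −∫ h ⟪G,v⟫` for all
`v ∈ S`, we have `∫ (h‖G‖² + 2σ⟪G,Q⟫) w dμ = ∫ h (w‖G‖² + 2⟪G,P⟫) dμ`. -/
theorem adjoint_derivative_central_identity
    {Ω : Type*} [MeasurableSpace Ω] (μ : Measure Ω) (N : ℕ)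
    (σ w h : Ω → ℝ)
    (hσmeas : Measurable σ) (hσ : MemLp σ ∞ μ)
    (hwmeas : Measurable w) (hw : MemLp w ∞ μ)
    (hhmeas : Measurable h) (hh : MemLp h ∞ μ)
    (G P Q : Ω → EuclideanSpace ℝ (Fin N))
    (hG : MemLp G 2 μ) (hP : MemLp P 2 μ) (hQ : MemLp Q 2 μ)
    (S : Set (Ω → EuclideanSpace ℝ (Fin N)))
    (hS : ∀ v ∈ S, MemLp v 2 μ) (hPS : P ∈ S) (hQS : Q ∈ S)
    (hvarP : ∀ v ∈ S, ∫ x, σ x * ⟪P x, v x⟫ ∂μ = -∫ x, σ x * w x * ⟪G x, v x⟫ ∂μ)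
    (hvarQ : ∀ v ∈ S, ∫ x, σ x * ⟪Q x, v x⟫ ∂μ = -∫ x, h x * ⟪G x, v x⟫ ∂μ) :
    ∫ x, (h x * ‖G x‖ ^ 2 + 2 * σ x * ⟪G x, Q x⟫) * w x ∂μ =
      ∫ x, h x * (w x * ‖G x‖ ^ 2 + 2 * ⟪G x, P x⟫) ∂μ := by
  -- integrability facts
  have intGG : Integrable (fun x => ‖G x‖ ^ 2) μ := by
    have := integrable_inner_of_memL2 hG hG
    refine this.congr (Filter.Eventually.of_forall fun x => ?_)
    exact real_inner_self_eq_norm_sq _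
  have intGQ : Integrable (fun x => ⟪G x, Q x⟫) μ := integrable_inner_of_memL2 hG hQ
  have intGP : Integrable (fun x => ⟪G x, P x⟫) μ := integrable_inner_of_memL2 hG hP
  have int1 : Integrable (fun x => h x * ‖G x‖ ^ 2 * w x) μ := by
    have := memLinfty_mul_integrable hw (memLinfty_mul_integrable hh intGG)
    refine this.congr (Filter.Eventually.of_forall fun x => ?_); ring
  have int2 : Integrable (fun x => σ x * w x * ⟪G x, Q x⟫) μ := by
    have := memLinfty_mul_integrable hσ (memLinfty_mul_integrable hw intGQ)
    refine this.congr (Filter.Eventually.of_forall fun x => ?_); ring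
  have int3 : Integrable (fun x => h x * ⟪G x, P x⟫) μ := memLinfty_mul_integrable hh intGP
  -- the key equality from the two variational identities
  have key : ∫ x, σ x * w x * ⟪G x, Q x⟫ ∂μ = ∫ x, h x * ⟪G x, P x⟫ ∂μ := by
    have e1 := hvarP Q hQS
    have e2 := hvarQ P hPS
    have e3 : ∫ x, σ x * ⟪P x, Q x⟫ ∂μ = ∫ x, σ x * ⟪Q x, P x⟫ ∂μ := by
      congr 1; funext x; rw [real_inner_comm]
    have := e1.symm.trans (e3.trans e2)
    linarith
  -- split both sides
  have lhs : ∫ x, (h x * ‖G x‖ ^ 2 + 2 * σ x * ⟪G x, Q x⟫) * w x ∂μ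
      = ∫ x, h x * ‖G x‖ ^ 2 * w x ∂μ + 2 * ∫ x, σ x * w x * ⟪G x, Q x⟫ ∂μ := by
    rw [← integral_const_mul 2, ← integral_add int1 (int2.const_mul 2)]
    congr 1; funext x; ring
  have rhs : ∫ x, h x * (w x * ‖G x‖ ^ 2 + 2 * ⟪G x, P x⟫) ∂μ
      = ∫ x, h x * ‖G x‖ ^ 2 * w x ∂μ + 2 * ∫ x, h x * ⟪G x, P x⟫ ∂μ := by
    rw [← integral_const_mul 2, ← integral_add int1 (int3.const_mul 2)]
    congr 1; funext x; ring
  rw [lhs, rhs, key]
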